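/- Let [n] denote the n-element reflexive chain. Let f : [k+1] → [k] and g : [m] → [k] be surjective p-morphisms (k, m ≥ 1). Then there exist surjective p-morphisms f̄ : [m+1] → [m] and ḡ : [m+1] → [k+1] such that f ∘ ḡ = g ∘ f̄. -/
import Mathlib


/-- A p-morphism between Kripke frames `(W, rW)` and `(V, rV)`:
a function that is stable and open. -/
def IsPMorphism {W V : Type*} (rW : W → W → Prop) (rV : V → V → Prop) (f : W → V) : Prop :=
  (∀ ⦃w w'⦄, rW w w' → rV (f w) (f w')) ∧
  (∀ w v', rV (f w) v' → ∃ w', rW w w' ∧ f w' = v')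

/-- The `n`-element reflexive chain `[n]`, realized as `Fin n` with `i ≺ j ↔ i ≤ j`. -/
def chainRel (n : ℕ) : Fin n → Fin n → Prop := (· ≤ ·)

/-- A monotone surjection between reflexive chains is a p-morphism. -/
lemma mono_surj_pmorph {a b : ℕ} (f : Fin a → Fin b)
    (hmono : ∀ i j : Fin a, (i:ℕ) ≤ j → (f i : ℕ) ≤ f j)
    (hsurj : Function.Surjective f) :
    IsPMorphism (chainRel a) (chainRel b) f := by
  constructor
  · intro w w' h
    exact hmono w w' h
  · intro w v' h
    obtain ⟨w'', hw''⟩ := hsurj v'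
    rcases le_total (w:ℕ) (w'':ℕ) with h1 | h1
    · exact ⟨w'', h1, hw''⟩
    · refine ⟨w, Fin.le_refl _, ?_⟩
      have h2 := hmono w'' w h1
      have h3 : (f w : ℕ) ≤ (v' : ℕ) := h
      have h4 : (f w'' : ℕ) = (v' : ℕ) := by rw [hw'']
      exact Fin.ext (by omega)

/-- Structure of a monotone surjection `[k+1] → [k]`, phrased for a ℕ-valued function:
there is a threshold `t` below which it is the identity and above which it shifts down. -/
lemma chain_collapse_struct {k : ℕ} (hk : 1 ≤ k) (F : ℕ → ℕ)
    (hFlt : ∀ i, i ≤ k → F i < k)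
    (hmono : ∀ i j, i ≤ j → j ≤ k → F i ≤ F j)
    (hsurj : ∀ v, v < k → ∃ i, i ≤ k ∧ F i = v) :
    ∃ t : ℕ, t < k ∧ ∀ i, i ≤ k →
      (i ≤ t → F i = i) ∧ (t < i → F i = i - 1) := by
  have hf0 : F 0 = 0 := by
    obtain ⟨w, hw1, hw2⟩ := hsurj 0 (by omega)
    have h1 := hmono 0 w (by omega) hw1
    omega
  have nogap : ∀ i, i + 1 ≤ k → F (i+1) ≤ F i + 1 := by
    intro i h
    by_contra hc
    push_neg at hc
    have hv : F i + 1 < k := by have := hFlt (i+1) h; omega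
    obtain ⟨w, hw1, hw2⟩ := hsurj (F i + 1) hv
    have h1 : ¬ (w ≤ i) := fun hle => by have := hmono w i hle (by omega); omega
    have h2 : ¬ (i+1 ≤ w) := fun hle => by have := hmono (i+1) w hle hw1; omega
    omega
  have upper : ∀ i, i ≤ k → F i ≤ i := by
    intro i
    induction i with
    | zero => intro h; omega
    | succ n ih => intro h; have := nogap n h; have := ih (by omega); omega
  have hfk : F k = k - 1 := by
    obtain ⟨w, hw1, hw2⟩ := hsurj (k-1) (by omega)
    have h1 := hmono w k hw1 (le_refl _)
    have h3 := hFlt k (le_refl _)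
    omega
  have tele : ∀ d i, i + d = k → F k ≤ F i + d := by
    intro d
    induction d with
    | zero => intro i h; have he : i = k := (by omega); rw [he]; omega
    | succ n ih =>
        intro i h
        have h1 := ih (i+1) (by omega)
        have h2 := nogap i (by omega)
        omega
  have lower : ∀ i, i ≤ k → i - 1 ≤ F i := by
    intro i h
    have := tele (k - i) i (by omega)
    omega
  classical
  have hP : ∃ i : ℕ, i ≤ k ∧ F i < i := ⟨k, le_refl _, by omega⟩
  obtain ⟨hi0le, hi0drop⟩ := Nat.find_spec hP
  set i0 := Nat.find hP with hi0def
  have hi0pos : 1 ≤ i0 := by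
    by_contra hc
    have : i0 = 0 := by omega
    rw [this] at hi0drop
    omega
  have hnotbefore : ∀ j, j < i0 → j ≤ k → ¬ (F j < j) := by
    intro j hj hjk hc
    exact Nat.find_min hP hj ⟨hjk, hc⟩
  have pers : ∀ i, i0 ≤ i → i ≤ k → F i = i - 1 := by
    intro i
    induction i with
    | zero => intro h1 h2; omega
    | succ n ih =>
        intro h1 h2
        rcases Nat.lt_or_ge n i0 with hn | hn
        · have he : i0 = n + 1 := by omega
          have hd : F (n+1) < n + 1 := by rw [← he]; exact hi0drop
          have := lower (n+1) h2
          omega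
        · have hprev := ih hn (by omega)
          have := nogap n h2
          have := lower (n+1) h2
          omega
  refine ⟨i0 - 1, by omega, fun i hik => ⟨fun hle => ?_, fun hgt => ?_⟩⟩
  · have h1 := hnotbefore i (by omega) hik
    have h2 := upper i hik
    omega
  · exact pers i (by omega) hik

/-- Given surjective p-morphisms `f : [k+1] → [k]` and
`g : [m] → [k]` between reflexive chains (`k, m ≥ 1`), there exist surjective
p-morphisms `f̄ : [m+1] → [m]` and `ḡ : [m+1] → [k+1]` with `f ∘ ḡ = g ∘ f̄`. -/
theorem statement8 (k m : ℕ) (hk : 1 ≤ k) (hm : 1 ≤ m)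
    (f : Fin (k + 1) → Fin k) (g : Fin m → Fin k)
    (hf : IsPMorphism (chainRel (k + 1)) (chainRel k) f) (hfs : Function.Surjective f)
    (hg : IsPMorphism (chainRel m) (chainRel k) g) (hgs : Function.Surjective g) :
    ∃ (fb : Fin (m + 1) → Fin m) (gb : Fin (m + 1) → Fin (k + 1)),
      IsPMorphism (chainRel (m + 1)) (chainRel m) fb ∧ Function.Surjective fb ∧
      IsPMorphism (chainRel (m + 1)) (chainRel (k + 1)) gb ∧ Function.Surjective gb ∧
      f ∘ gb = g ∘ fb := by
  have fmono : ∀ i j : Fin (k+1), (i:ℕ) ≤ (j:ℕ) → (f i : ℕ) ≤ (f j : ℕ) :=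
    fun i j h => hf.1 h
  have gmono : ∀ i j : Fin m, (i:ℕ) ≤ (j:ℕ) → (g i : ℕ) ≤ (g j : ℕ) :=
    fun i j h => hg.1 h
  -- transfer f to a ℕ-valued function and get its structure
  set F : ℕ → ℕ := fun i => (f ⟨min i k, by omega⟩ : ℕ) with hF
  have hFeq : ∀ i : Fin (k+1), F (i:ℕ) = (f i : ℕ) := by
    intro i
    have : (⟨min (i:ℕ) k, by omega⟩ : Fin (k+1)) = i := by
      apply Fin.ext
      simp only []
      have := i.isLt
      omega
    simp only [hF, this]
  obtain ⟨t, htk, hts⟩ := chain_collapse_struct hk F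
    (fun i hi => (f _).isLt)
    (fun i j hij hjk => fmono ⟨min i k, by omega⟩ ⟨min j k, by omega⟩ (by simp; omega))
    (fun v hv => by
      obtain ⟨w, hw⟩ := hfs ⟨v, hv⟩
      refine ⟨(w:ℕ), by omega, ?_⟩
      rw [hFeq w, hw])
  -- transfer g to a ℕ-valued function
  set G : ℕ → ℕ := fun j => (g ⟨min j (m-1), by omega⟩ : ℕ) with hG
  have hGeq : ∀ j : Fin m, G (j:ℕ) = (g j : ℕ) := by
    intro j
    have : (⟨min (j:ℕ) (m-1), by omega⟩ : Fin m) = j := by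
      apply Fin.ext
      simp only []
      have := j.isLt
      omega
    simp only [hG, this]
  have Gmono : ∀ a b : ℕ, a ≤ b → G a ≤ G b := by
    intro a b hab
    exact gmono ⟨min a (m-1), by omega⟩ ⟨min b (m-1), by omega⟩ (by simp; omega)
  have Glt : ∀ a : ℕ, G a < k := fun a => (g _).isLt
  have Gsurj : ∀ v, v < k → ∃ j, j < m ∧ G j = v := by
    intro v hv
    obtain ⟨w, hw⟩ := hgs ⟨v, hv⟩
    exact ⟨(w:ℕ), w.isLt, by rw [hGeq w, hw]⟩
  -- pick a g-preimage of t
  obtain ⟨s, hs⟩ := hgs ⟨t, htk⟩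
  have hslt : (s:ℕ) < m := s.isLt
  have hsval : G (s:ℕ) = t := by rw [hGeq s, hs]
  -- define fb with its defining property
  obtain ⟨fb, hfb⟩ : ∃ fb : Fin (m+1) → Fin m, ∀ i : Fin (m+1),
      ((i:ℕ) ≤ (s:ℕ) → (fb i : ℕ) = (i:ℕ)) ∧ ((s:ℕ) < (i:ℕ) → (fb i : ℕ) = (i:ℕ) - 1) := by
    refine ⟨fun i => if h : (i:ℕ) ≤ (s:ℕ) then ⟨(i:ℕ), by omega⟩
      else ⟨(i:ℕ) - 1, by have := i.isLt; omega⟩, fun i => ⟨fun h => ?_, fun h => ?_⟩⟩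
    · simp only [dif_pos h]
    · simp only [dif_neg (show ¬ (i:ℕ) ≤ (s:ℕ) by omega)]
  -- define gb with its defining property
  obtain ⟨gb, hgb⟩ : ∃ gb : Fin (m+1) → Fin (k+1), ∀ i : Fin (m+1),
      ((i:ℕ) ≤ (s:ℕ) → (gb i : ℕ) = G (i:ℕ)) ∧
      ((s:ℕ) < (i:ℕ) → (gb i : ℕ) = G ((i:ℕ) - 1) + 1) := by
    refine ⟨fun i => if h : (i:ℕ) ≤ (s:ℕ) then ⟨G (i:ℕ), by have := Glt (i:ℕ); omega⟩
      else ⟨G ((i:ℕ) - 1) + 1, by have := Glt ((i:ℕ) - 1); omega⟩,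
      fun i => ⟨fun h => ?_, fun h => ?_⟩⟩
    · simp only [dif_pos h]
    · simp only [dif_neg (show ¬ (i:ℕ) ≤ (s:ℕ) by omega)]
  have fbmono : ∀ i j : Fin (m+1), (i:ℕ) ≤ (j:ℕ) → (fb i : ℕ) ≤ (fb j : ℕ) := by
    intro i j hij
    rcases le_or_gt (i:ℕ) (s:ℕ) with h1 | h1 <;> rcases le_or_gt (j:ℕ) (s:ℕ) with h2 | h2
    · rw [(hfb i).1 h1, (hfb j).1 h2]; omega
    · rw [(hfb i).1 h1, (hfb j).2 h2]; omega
    · omega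
    · rw [(hfb i).2 h1, (hfb j).2 h2]; omega
  have fbsurj : Function.Surjective fb := by
    intro v
    rcases le_or_gt (v:ℕ) (s:ℕ) with h1 | h1
    · refine ⟨⟨(v:ℕ), by have := v.isLt; omega⟩, Fin.ext ?_⟩
      rw [(hfb _).1 (show ((⟨(v:ℕ), by have := v.isLt; omega⟩ : Fin (m+1)):ℕ) ≤ (s:ℕ) from h1)]
    · refine ⟨⟨(v:ℕ) + 1, by have := v.isLt; omega⟩, Fin.ext ?_⟩
      rw [(hfb _).2 (show (s:ℕ) < ((⟨(v:ℕ) + 1, by have := v.isLt; omega⟩ : Fin (m+1)):ℕ) from by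
        show (s:ℕ) < (v:ℕ) + 1; omega)]
      show (v:ℕ) + 1 - 1 = (v:ℕ)
      omega
  have gbmono : ∀ i j : Fin (m+1), (i:ℕ) ≤ (j:ℕ) → (gb i : ℕ) ≤ (gb j : ℕ) := by
    intro i j hij
    rcases le_or_gt (i:ℕ) (s:ℕ) with h1 | h1 <;> rcases le_or_gt (j:ℕ) (s:ℕ) with h2 | h2
    · rw [(hgb i).1 h1, (hgb j).1 h2]; exact Gmono _ _ hij
    · rw [(hgb i).1 h1, (hgb j).2 h2]
      have := Gmono (i:ℕ) ((j:ℕ) - 1) (by omega)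
      omega
    · omega
    · rw [(hgb i).2 h1, (hgb j).2 h2]
      have := Gmono ((i:ℕ) - 1) ((j:ℕ) - 1) (by omega)
      omega
  have gbsurj : Function.Surjective gb := by
    intro c
    rcases le_or_gt (c:ℕ) t with h1 | h1
    · obtain ⟨j, hjm, hj⟩ := Gsurj (c:ℕ) (by omega)
      have hmin : G (min j (s:ℕ)) = (c:ℕ) := by
        rcases le_total j (s:ℕ) with h2 | h2
        · rw [min_eq_left h2, hj]
        · rw [min_eq_right h2]
          have := Gmono (s:ℕ) j h2
          omega
      refine ⟨⟨min j (s:ℕ), by omega⟩, Fin.ext ?_⟩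
      rw [(hgb _).1 (show ((⟨min j (s:ℕ), by omega⟩ : Fin (m+1)):ℕ) ≤ (s:ℕ) from by
        show min j (s:ℕ) ≤ (s:ℕ); omega)]
      exact hmin
    · have hc1 : (c:ℕ) - 1 < k := by have := c.isLt; omega
      obtain ⟨j, hjm, hj⟩ := Gsurj ((c:ℕ) - 1) hc1
      have hmax : G (max j (s:ℕ)) = (c:ℕ) - 1 := by
        rcases le_total j (s:ℕ) with h2 | h2
        · rw [max_eq_right h2]
          have := Gmono j (s:ℕ) h2
          omega
        · rw [max_eq_left h2, hj]
      refine ⟨⟨max j (s:ℕ) + 1, by omega⟩, Fin.ext ?_⟩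
      rw [(hgb _).2 (show (s:ℕ) < ((⟨max j (s:ℕ) + 1, by omega⟩ : Fin (m+1)):ℕ) from by
        show (s:ℕ) < max j (s:ℕ) + 1; omega)]
      show G (max j (s:ℕ) + 1 - 1) + 1 = (c:ℕ)
      rw [Nat.add_sub_cancel, hmax]
      omega
  refine ⟨fb, gb, mono_surj_pmorph fb fbmono fbsurj, fbsurj,
    mono_surj_pmorph gb gbmono gbsurj, gbsurj, ?_⟩
  -- the square commutes
  funext i
  simp only [Function.comp_apply]
  apply Fin.ext
  rw [← hFeq (gb i), ← hGeq (fb i)]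
  rcases le_or_gt (i:ℕ) (s:ℕ) with h1 | h1
  · rw [(hfb i).1 h1, (hgb i).1 h1]
    have hle : G (i:ℕ) ≤ t := by
      have := Gmono (i:ℕ) (s:ℕ) h1
      omega
    exact (hts (G (i:ℕ)) (by have := Glt (i:ℕ); omega)).1 hle
  · rw [(hfb i).2 h1, (hgb i).2 h1]
    have hgt : t < G ((i:ℕ) - 1) + 1 := by
      have := Gmono (s:ℕ) ((i:ℕ) - 1) (by omega)
      omega
    have := (hts (G ((i:ℕ) - 1) + 1) (by have := Glt ((i:ℕ) - 1); omega)).2 hgt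
    omega
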